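/- The scattering function a(z) = (β_L(z)β_R(z)^{−1} + β_L(z)^{−1}β_R(z))/2 has strictly positive real part for all z ∈ ℂ \ ([−1,1] ∪ [λ₋, λ₊]); in particular a(z) has no zeros. -/

import Mathlib

open Complex Set

/-- Möbius map lemma: if `z` is off the segment `[α,β]`, then `(z-β)/(z-α)`
is nonzero and not a nonpositive real. -/
lemma mobius_off_segment (α β : ℝ) (hαβ : α < β) (z : ℂ)
    (hz : ¬(z.im = 0 ∧ α ≤ z.re ∧ z.re ≤ β)) :
    (z - β)/(z - α) ≠ 0 ∧
      (0 < ((z - β)/(z - α)).re ∨ ((z - β)/(z - α)).im ≠ 0) := by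
  have hα : z - α ≠ 0 := by
    intro h
    apply hz
    have : z = (α : ℂ) := by linear_combination h
    simp [this, le_of_lt hαβ]
  have hβ : z - β ≠ 0 := by
    intro h
    apply hz
    have : z = (β : ℂ) := by linear_combination h
    simp [this, le_of_lt hαβ]
  refine ⟨div_ne_zero hβ hα, ?_⟩
  by_contra hcon
  push_neg at hcon
  obtain ⟨hre, him⟩ := hcon
  set w := (z - ↑β)/(z - ↑α) with hw
  set t := w.re with ht
  have hwt : w = (t : ℂ) := by
    apply Complex.ext <;> simp [ht, him]
  have hmul : z - β = w * (z - α) := by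
    rw [hw, div_mul_cancel₀ _ hα]
  have h1t : (0:ℝ) < 1 - t := by linarith
  have h1t' : (1 : ℂ) - t ≠ 0 := by
    have : ((1 - t : ℝ) : ℂ) ≠ 0 := Complex.ofReal_ne_zero.mpr h1t.ne'
    push_cast at this
    exact this
  have hzeq : z = (((β - t*α)/(1-t) : ℝ) : ℂ) := by
    rw [hwt] at hmul
    push_cast
    field_simp
    linear_combination hmul
  apply hz
  rw [hzeq]
  refine ⟨Complex.ofReal_im _, ?_, ?_⟩
  · simp only [Complex.ofReal_re]
    rw [le_div_iff₀ h1t]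
    nlinarith
  · simp only [Complex.ofReal_re]
    rw [div_le_iff₀ h1t]
    nlinarith

/-- Positivity of the real part of a quotient of fourth roots. -/
lemma quot_pow_re_pos (u v : ℂ) (hu0 : u ≠ 0) (hu : 0 < u.re ∨ u.im ≠ 0)
    (hv0 : v ≠ 0) (hv : 0 < v.re ∨ v.im ≠ 0) :
    0 < ((u ^ ((1:ℂ)/4)) / (v ^ ((1:ℂ)/4))).re := by
  have hau : |u.arg| < Real.pi := by
    rcases Complex.arg_le_pi u |>.lt_or_eq with h | h
    · rcases Complex.neg_pi_lt_arg u with h'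
      rw [abs_lt]; exact ⟨h', h⟩
    · exfalso
      rw [Complex.arg_eq_pi_iff] at h
      rcases hu with h' | h' <;> [linarith [h.1]; exact h' h.2]
  have hav : |v.arg| < Real.pi := by
    rcases Complex.arg_le_pi v |>.lt_or_eq with h | h
    · rcases Complex.neg_pi_lt_arg v with h'
      rw [abs_lt]; exact ⟨h', h⟩
    · exfalso
      rw [Complex.arg_eq_pi_iff] at h
      rcases hv with h' | h' <;> [linarith [h.1]; exact h' h.2]
  rw [Complex.cpow_def_of_ne_zero hu0, Complex.cpow_def_of_ne_zero hv0,
    ← Complex.exp_sub]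
  rw [Complex.exp_re]
  apply mul_pos (Real.exp_pos _)
  apply Real.cos_pos_of_mem_Ioo
  have him : (Complex.log u * ((1:ℂ)/4) - Complex.log v * ((1:ℂ)/4)).im
      = (u.arg - v.arg)/4 := by
    simp [Complex.sub_im, Complex.mul_im, Complex.log_im, Complex.log_re]
    ring
  rw [him]
  rw [abs_lt] at hau hav
  have hπ := Real.pi_pos
  constructor <;> nlinarith [hau.1, hau.2, hav.1, hav.2]

theorem scattering_a_positive_real_part
    (lm lp : ℝ) (h1 : -1 < lm) (h2 : lm < lp) (h3 : lp < 1) :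
    let segL : Set ℂ := {w : ℂ | w.im = 0 ∧ -1 ≤ w.re ∧ w.re ≤ 1}
    let segR : Set ℂ := {w : ℂ | w.im = 0 ∧ lm ≤ w.re ∧ w.re ≤ lp}
    let βL : ℂ → ℂ := fun z => ((z - 1) / (z + 1)) ^ ((1 : ℂ)/4)
    let βR : ℂ → ℂ := fun z => ((z - (lp : ℂ)) / (z - (lm : ℂ))) ^ ((1 : ℂ)/4)
    let a : ℂ → ℂ := fun z => (βL z / βR z + βR z / βL z) / 2
    ∀ z : ℂ, z ∉ segL ∪ segR → 0 < (a z).re ∧ a z ≠ 0 := by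
  intro segL segR βL βR a z hz
  simp only [Set.mem_union, Set.mem_setOf_eq, not_or] at hz
  obtain ⟨hzL, hzR⟩ := hz
  have hL := mobius_off_segment (-1) 1 (by norm_num) z (by
    intro ⟨h, h', h''⟩; exact hzL ⟨h, h', h''⟩)
  have hR := mobius_off_segment lm lp h2 z (fun h => hzR h)
  have hL' : (z - 1)/(z + 1) = (z - ((1:ℝ):ℂ))/(z - ((-1:ℝ):ℂ)) := by
    push_cast; ring_nf
  rw [← hL'] at hL
  have hp := quot_pow_re_pos _ _ hL.1 hL.2 hR.1 hR.2
  have hq := quot_pow_re_pos _ _ hR.1 hR.2 hL.1 hL.2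
  have hdiv : ∀ x y : ℂ, x ^ ((1:ℂ)/4) / y ^ ((1:ℂ)/4) = (x ^ ((1:ℂ)/4)) / (y ^ ((1:ℂ)/4)) := fun _ _ => rfl
  have hre : (a z).re = ((βL z / βR z).re + (βR z / βL z).re) / 2 := by
    show (((βL z / βR z) + (βR z / βL z)) / 2).re = _
    rw [show ((βL z / βR z) + (βR z / βL z)) / 2
        = ((βL z / βR z) + (βR z / βL z)) * ((1/2 : ℝ) : ℂ) by push_cast; ring]
    simp [Complex.mul_re]
    ring
  have hpos : 0 < (a z).re := by
    rw [hre]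
    have hp' : 0 < (βL z / βR z).re := hp
    have hq' : 0 < (βR z / βL z).re := hq
    linarith
  exact ⟨hpos, fun h => by simp [h] at hpos⟩
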